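/- Let w ∈ ℍ and h ∈ ℝ, and for ε > 0 small enough that g'_{w,ε,θ}(0) avoids the nonpositive real axis for all θ, consider the Fourier coefficients of θ ↦ (g'_{w,ε,θ}(0))^{h} (principal power), where g'_{w,ε,θ}(0) = 1 + (ε²/16)(e^{2iθ}/w² + e^{−2iθ}/w̄²). Then: (i) all odd Fourier coefficients vanish exactly: ∫₀^{2π} e^{−i(2m+1)θ} (g'_{w,ε,θ}(0))^{h} dθ = 0 for every integer m; and (ii) for every nonzero integer n, ∫₀^{2π} e^{−2inθ} (g'_{w,ε,θ}(0))^{h} dθ = O(ε^{2|n|}) as ε → 0⁺. -/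

import Mathlib

set_option maxHeartbeats 1000000
open Complex Real Filter Asymptotics Metric


-- bound on cpow near 1
theorem cpow_bound (h : ℝ) {z : ℂ} (hz : ‖z - 1‖ ≤ 1/2) : ‖z ^ (h:ℂ)‖ ≤ 2 ^ |h| := by
  have h1 : (1:ℝ)/2 ≤ ‖z‖ := by
    have := norm_sub_norm_le (1:ℂ) (1 - z)
    simp only [norm_one] at this
    have h2 : ‖(1:ℂ) - z‖ = ‖z - 1‖ := by rw [norm_sub_rev]
    have h3 : (1:ℂ) - (1 - z) = z := by ring
    rw [h3, h2] at this
    linarith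
  have h2 : ‖z‖ ≤ 2 := by
    calc ‖z‖ = ‖(z - 1) + 1‖ := by ring_nf
    _ ≤ ‖z - 1‖ + ‖(1:ℂ)‖ := norm_add_le _ _
    _ ≤ 2 := by rw [norm_one]; linarith
  have habs : ‖z ^ (h:ℂ)‖ = ‖z‖ ^ h := by
    simpa using Complex.abs_cpow_real z h
  rw [habs]
  rcases le_or_gt 0 h with hh | hh
  · calc ‖z‖ ^ h ≤ 2 ^ h := Real.rpow_le_rpow (by linarith) h2 hh
    _ = 2 ^ |h| := by rw [_root_.abs_of_nonneg hh]
  · have : ‖z‖ ^ h ≤ ((1:ℝ)/2) ^ h := by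
      apply Real.rpow_le_rpow_of_nonpos (by norm_num) h1 hh.le
    calc ‖z‖ ^ h ≤ ((1:ℝ)/2) ^ h := this
    _ = 2 ^ (-h) := by
        rw [one_div, Real.inv_rpow (by norm_num), ← Real.rpow_neg (by norm_num : (0:ℝ) ≤ 2) h]
    _ = 2 ^ |h| := by rw [_root_.abs_of_neg hh]

-- slitPlane membership
theorem slit_of_close {z : ℂ} (hz : ‖z - 1‖ ≤ 1/2) : z ∈ Complex.slitPlane := by
  refine Complex.mem_slitPlane_iff.mpr (Or.inl ?_)
  have := Complex.abs_re_le_norm (z - 1)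
  have h2 : |z.re - 1| ≤ 1/2 := by
    simpa using le_trans this hz
  have := abs_le.mp h2
  linarith

theorem part1 (w : ℂ) (h : ℝ) (d : ℝ → ℝ → ℂ)
    (hd : ∀ ε θ : ℝ, d ε θ = 1 + ((ε : ℂ) ^ 2 / 16) *
        (Complex.exp (2 * (θ : ℂ) * Complex.I) / w ^ 2
          + Complex.exp (-(2 * (θ : ℂ)) * Complex.I) / (starRingEnd ℂ w) ^ 2))
    (ε : ℝ) (m : ℤ) :
    ∫ θ in (0 : ℝ)..(2 * π),
      Complex.exp (-((2 * (m : ℂ) + 1) * (θ : ℂ)) * Complex.I) * (d ε θ) ^ (h : ℂ) = 0 := by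
  set f : ℝ → ℂ := fun θ =>
    Complex.exp (-((2 * (m : ℂ) + 1) * (θ : ℂ)) * Complex.I) * (d ε θ) ^ (h : ℂ) with hf
  have key : ∀ θ : ℝ, f (θ + π) = - f θ := by
    intro θ
    have hdeq : d ε (θ + π) = d ε θ := by
      rw [hd, hd]
      have e1 : 2 * ((θ:ℝ) + π : ℝ) * Complex.I
          = 2 * (θ:ℂ) * Complex.I + (1:ℤ) * (2 * π * Complex.I) := by push_cast; ring
      have e2 : -(2 * (((θ:ℝ) + π : ℝ):ℂ)) * Complex.I
          = -(2 * (θ:ℂ)) * Complex.I + (-1:ℤ) * (2 * π * Complex.I) := by push_cast; ring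
      rw [e1, e2, Complex.exp_add, Complex.exp_add, Complex.exp_int_mul_two_pi_mul_I,
        Complex.exp_int_mul_two_pi_mul_I, mul_one, mul_one]
    have hexp : Complex.exp (-((2 * (m : ℂ) + 1) * (((θ:ℝ) + π : ℝ):ℂ)) * Complex.I)
        = - Complex.exp (-((2 * (m : ℂ) + 1) * (θ : ℂ)) * Complex.I) := by
      have e3 : -((2 * (m : ℂ) + 1) * (((θ:ℝ) + π : ℝ):ℂ)) * Complex.I
          = -((2 * (m : ℂ) + 1) * (θ : ℂ)) * Complex.I
            + ((-m : ℤ) * (2 * π * Complex.I) + (-π) * Complex.I) := by push_cast; ring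
      rw [e3, Complex.exp_add, Complex.exp_add, Complex.exp_int_mul_two_pi_mul_I]
      have : Complex.exp (-(π:ℂ) * Complex.I) = -1 := by
        rw [neg_mul, Complex.exp_neg, Complex.exp_pi_mul_I]; norm_num
      rw [this]; ring
    simp only [hf, hdeq, hexp]; ring
  have hper : Function.Periodic f (2 * π) := by
    intro θ
    have : θ + 2 * π = (θ + π) + π := by ring
    rw [this, key, key]; ring
  have h1 : ∫ θ in (0:ℝ)..(2*π), f (θ + π) = ∫ θ in π..(2*π + π), f θ := by
    simpa using intervalIntegral.integral_comp_add_right f π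
  have h2 : ∫ θ in π..(π + 2*π), f θ = ∫ θ in (0:ℝ)..(0 + 2*π), f θ :=
    hper.intervalIntegral_add_eq π 0
  have h3 : ∫ θ in (0:ℝ)..(2*π), f (θ + π) = - ∫ θ in (0:ℝ)..(2*π), f θ := by
    rw [show (fun θ => f (θ + π)) = (fun θ => - f θ) from funext key]
    exact intervalIntegral.integral_neg
  have h4 : (2*π + π) = π + 2 * π := by ring
  have : - ∫ θ in (0:ℝ)..(2*π), f θ = ∫ θ in (0:ℝ)..(2*π), f θ := by
    rw [← h3, h1, h4, h2]; norm_num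
  have h5 : (2:ℂ) * ∫ θ in (0:ℝ)..(2*π), f θ = 0 := by linear_combination -this
  have := mul_eq_zero.mp h5
  simpa using this

theorem aux2 (a b : ℂ) (h : ℝ) (N : ℕ) (hN : 0 < N) :
    (fun ε : ℝ => ∫ θ in (0:ℝ)..(2*π),
        Complex.exp (-(2 * (N:ℂ) * (θ:ℂ)) * Complex.I) *
          (1 + (ε:ℂ)^2 * (a * Complex.exp (2*(θ:ℂ)*Complex.I)
            + b * Complex.exp (-(2*(θ:ℂ))*Complex.I))) ^ (h:ℂ))
      =O[nhdsWithin 0 (Set.Ioi 0)] (fun ε : ℝ => ε ^ (2 * N)) := by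
  set K : ℝ := 1 / (2 * Real.sqrt (‖a‖ + 1)) with hK
  have hsa : (0:ℝ) < Real.sqrt (‖a‖ + 1) := Real.sqrt_pos.mpr (by positivity)
  have hKpos : 0 < K := by positivity
  have hKsq : K ^ 2 * (‖a‖ + 1) = 1 / 4 := by
    rw [hK]; rw [div_pow, mul_pow, Real.sq_sqrt (by positivity)]
    field_simp; ring
  set δb : ℝ := 1 / (2 * Real.sqrt (‖b‖ + 1)) with hδb
  have hsb : (0:ℝ) < Real.sqrt (‖b‖ + 1) := Real.sqrt_pos.mpr (by positivity)
  have hδbpos : 0 < δb := by positivity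
  have hδbsq : δb ^ 2 * (‖b‖ + 1) = 1 / 4 := by
    rw [hδb]; rw [div_pow, mul_pow, Real.sq_sqrt (by positivity)]
    field_simp; ring
  set δ : ℝ := min K δb with hδ
  have hδpos : 0 < δ := lt_min hKpos hδbpos
  set M : ℝ := (2:ℝ) ^ |h| with hM
  have hMpos : 0 < M := Real.rpow_pos_of_pos (by norm_num) _
  rw [isBigO_iff]
  refine ⟨2 * π * M / K ^ (2*N), ?_⟩
  filter_upwards [Ioo_mem_nhdsGT_of_mem (Set.left_mem_Ico.mpr hδpos)] with ε hε
  obtain ⟨hε0, hεδ⟩ := hε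
  have hεK : ε ≤ K := le_of_lt (lt_of_lt_of_le hεδ (min_le_left _ _))
  have hεδb : ε ≤ δb := le_of_lt (lt_of_lt_of_le hεδ (min_le_right _ _))
  set R : ℝ := K / ε with hR
  have hRpos : 0 < R := by positivity
  have hR1 : 1 ≤ R := (one_le_div hε0).mpr hεK
  -- the key smallness bound on the annulus
  have hsmall : ∀ ζ : ℂ, 1 ≤ ‖ζ‖ → ‖ζ‖ ≤ R →
      ‖(ε:ℂ)^2 * (a * ζ^2 + b / ζ^2)‖ ≤ 1/2 := by
    intro ζ h1 h2
    have hζpos : (0:ℝ) < ‖ζ‖ := lt_of_lt_of_le one_pos h1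
    have hε2 : ‖((ε:ℝ):ℂ)^2‖ = ε^2 := by
      rw [norm_pow, Complex.norm_real, Real.norm_eq_abs, _root_.sq_abs]
    have e1 : ‖(ε:ℂ)^2 * (a * ζ^2 + b / ζ^2)‖
        ≤ ε^2 * (‖a‖ * ‖ζ‖^2 + ‖b‖ / ‖ζ‖^2) := by
      rw [norm_mul, hε2]
      gcongr
      calc ‖a * ζ^2 + b / ζ^2‖ ≤ ‖a * ζ^2‖ + ‖b / ζ^2‖ := norm_add_le _ _
      _ = ‖a‖ * ‖ζ‖^2 + ‖b‖ / ‖ζ‖^2 := by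
          simp [norm_mul, norm_div]
    have e2 : ε^2 * (‖a‖ * ‖ζ‖^2) ≤ 1/4 := by
      have : ε^2 * (‖a‖ * ‖ζ‖^2) ≤ ε^2 * ‖a‖ * R^2 := by
        rw [mul_assoc (ε^2)]; gcongr
      have hRe : ε^2 * R^2 = K^2 := by
        rw [hR]; field_simp
      calc ε^2 * (‖a‖ * ‖ζ‖^2) ≤ ε^2 * ‖a‖ * R^2 := this
      _ = K^2 * ‖a‖ := by rw [← hRe]; ring
      _ ≤ K^2 * (‖a‖+1) := by nlinarith [sq_nonneg K]
      _ = 1/4 := hKsq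
    have e3 : ε^2 * (‖b‖ / ‖ζ‖^2) ≤ 1/4 := by
      have h1' : ‖b‖ / ‖ζ‖^2 ≤ ‖b‖ := by
        apply div_le_self (norm_nonneg _)
        nlinarith
      calc ε^2 * (‖b‖ / ‖ζ‖^2) ≤ ε^2 * ‖b‖ := by gcongr
      _ ≤ δb^2 * (‖b‖+1) := by
          apply mul_le_mul (by nlinarith) (by linarith) (norm_nonneg b) (by positivity)
      _ = 1/4 := hδbsq
    calc ‖(ε:ℂ)^2 * (a * ζ^2 + b / ζ^2)‖ ≤ ε^2 * (‖a‖ * ‖ζ‖^2 + ‖b‖ / ‖ζ‖^2) := e1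
    _ = ε^2 * (‖a‖ * ‖ζ‖^2) + ε^2 * (‖b‖ / ‖ζ‖^2) := by ring
    _ ≤ 1/2 := by linarith
  set F : ℂ → ℂ := fun ζ =>
    (1 + (ε:ℂ)^2 * (a * ζ^2 + b / ζ^2)) ^ (h:ℂ) / ζ^(2*N+1) with hF
  -- differentiability on the annulus
  have hdiff : ∀ ζ : ℂ, 1 ≤ ‖ζ‖ → ‖ζ‖ ≤ R → DifferentiableAt ℂ F ζ := by
    intro ζ h1 h2
    have hζ0 : ζ ≠ 0 := by
      intro hc; rw [hc] at h1; simp at h1; linarith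
    have hb : DifferentiableAt ℂ (fun ζ : ℂ => 1 + (ε:ℂ)^2 * (a * ζ^2 + b / ζ^2)) ζ := by
      apply (differentiableAt_const _).add
      apply (differentiableAt_const _).mul
      apply (((differentiableAt_const a).mul (differentiableAt_pow 2)).add
        ((differentiableAt_const b).div (differentiableAt_pow 2) (pow_ne_zero 2 hζ0)))
    have hslit : (1 + (ε:ℂ)^2 * (a * ζ^2 + b / ζ^2)) ∈ Complex.slitPlane := by
      apply slit_of_close; simpa using hsmall ζ h1 h2
    exact (hb.cpow (differentiableAt_const _) hslit).div
      (differentiableAt_pow (2*N+1)) (pow_ne_zero _ hζ0)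
  -- shifting the contour
  have hann : (∮ z in C(0, R), F z) = ∮ z in C(0, 1), F z := by
    apply circleIntegral_eq_of_differentiable_on_annulus_off_countable one_pos hR1
      Set.countable_empty
    · intro ζ hζ
      simp only [Set.mem_diff, mem_closedBall, mem_ball, Complex.dist_eq, sub_zero] at hζ
      exact (hdiff ζ (not_lt.mp hζ.2) hζ.1).continuousAt.continuousWithinAt
    · intro ζ hζ
      simp only [Set.diff_empty, Set.mem_diff, mem_ball, mem_closedBall,
        Complex.dist_eq, sub_zero] at hζ
      exact hdiff ζ (not_le.mp hζ.2).le hζ.1.le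
  -- the circle integral at radius 1 equals I times the target integral
  have hcirc : (∮ z in C(0, 1), F z)
      = Complex.I * ∫ θ in (0:ℝ)..(2*π),
        Complex.exp (-(2 * (N:ℂ) * (θ:ℂ)) * Complex.I) *
          (1 + (ε:ℂ)^2 * (a * Complex.exp (2*(θ:ℂ)*Complex.I)
            + b * Complex.exp (-(2*(θ:ℂ))*Complex.I))) ^ (h:ℂ) := by
    rw [circleIntegral, ← intervalIntegral.integral_const_mul]
    apply intervalIntegral.integral_congr
    intro θ _
    have hcm : circleMap 0 1 θ = Complex.exp (θ * Complex.I) := by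
      simp [circleMap]
    simp only [deriv_circleMap, hcm, smul_eq_mul, hF]
    have hexpne : Complex.exp (θ * Complex.I) ≠ 0 := Complex.exp_ne_zero _
    have e1 : Complex.exp (θ * Complex.I) ^ 2 = Complex.exp (2*(θ:ℂ)*Complex.I) := by
      rw [← Complex.exp_nat_mul]; congr 1; push_cast; ring
    have e2 : b / Complex.exp (θ * Complex.I) ^ 2
        = b * Complex.exp (-(2*(θ:ℂ))*Complex.I) := by
      rw [e1, div_eq_mul_inv, ← Complex.exp_neg]; congr 2; ring
    have hq : Complex.exp (θ*Complex.I) / (Complex.exp (θ*Complex.I))^(2*N+1)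
        = Complex.exp (-(2*(N:ℂ)*θ)*Complex.I) := by
      rw [← Complex.exp_nat_mul, ← Complex.exp_sub]; congr 1; push_cast; ring
    calc Complex.exp (θ * Complex.I) * Complex.I *
          ((1 + (ε:ℂ)^2 * (a * Complex.exp (θ * Complex.I)^2
            + b / Complex.exp (θ * Complex.I)^2)) ^ (h:ℂ)
            / Complex.exp (θ * Complex.I)^(2*N+1))
        = Complex.I * ((Complex.exp (θ*Complex.I) / Complex.exp (θ*Complex.I)^(2*N+1)) *
            (1 + (ε:ℂ)^2 * (a * Complex.exp (θ * Complex.I)^2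
              + b / Complex.exp (θ * Complex.I)^2)) ^ (h:ℂ)) := by ring
      _ = Complex.I * (Complex.exp (-(2*(N:ℂ)*θ)*Complex.I) *
            (1 + (ε:ℂ)^2 * (a * Complex.exp (2*(θ:ℂ)*Complex.I)
              + b * Complex.exp (-(2*(θ:ℂ))*Complex.I))) ^ (h:ℂ)) := by
          rw [hq, e2, e1]
  -- bound on the outer circle
  have hbound : ‖∮ z in C(0, R), F z‖ ≤ 2 * π * R * (M / R^(2*N+1)) := by
    apply circleIntegral.norm_integral_le_of_norm_le_const hRpos.le
    intro ζ hζ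
    have hζR : ‖ζ‖ = R := by simpa [Complex.dist_eq] using hζ
    have h1 : 1 ≤ ‖ζ‖ := by rw [hζR]; exact hR1
    have h2 : ‖ζ‖ ≤ R := le_of_eq hζR
    rw [hF, norm_div, norm_pow, hζR]
    gcongr
    apply cpow_bound
    simpa using hsmall ζ h1 h2
  -- put it together
  have key : ‖∫ θ in (0:ℝ)..(2*π),
        Complex.exp (-(2 * (N:ℂ) * (θ:ℂ)) * Complex.I) *
          (1 + (ε:ℂ)^2 * (a * Complex.exp (2*(θ:ℂ)*Complex.I)
            + b * Complex.exp (-(2*(θ:ℂ))*Complex.I))) ^ (h:ℂ)‖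
      ≤ 2 * π * M / R ^ (2*N) := by
    have hnI : ‖(Complex.I : ℂ)‖ = 1 := by simp
    have e0 : ‖∫ θ in (0:ℝ)..(2*π),
        Complex.exp (-(2 * (N:ℂ) * (θ:ℂ)) * Complex.I) *
          (1 + (ε:ℂ)^2 * (a * Complex.exp (2*(θ:ℂ)*Complex.I)
            + b * Complex.exp (-(2*(θ:ℂ))*Complex.I))) ^ (h:ℂ)‖
        = ‖∮ z in C(0, 1), F z‖ := by
      rw [hcirc, norm_mul, hnI, one_mul]
    rw [e0, ← hann]
    calc ‖∮ z in C(0, R), F z‖ ≤ 2 * π * R * (M / R^(2*N+1)) := hbound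
    _ = 2 * π * M / R ^ (2*N) := by
        have hRne : R ≠ 0 := ne_of_gt hRpos
        rw [pow_succ]
        field_simp
  calc ‖∫ θ in (0:ℝ)..(2*π),
        Complex.exp (-(2 * (N:ℂ) * (θ:ℂ)) * Complex.I) *
          (1 + (ε:ℂ)^2 * (a * Complex.exp (2*(θ:ℂ)*Complex.I)
            + b * Complex.exp (-(2*(θ:ℂ))*Complex.I))) ^ (h:ℂ)‖
      ≤ 2 * π * M / R ^ (2*N) := key
    _ = 2 * π * M / K ^ (2*N) * ‖ε ^ (2*N)‖ := by
        have hRN : R ^ (2*N) = K^(2*N) / ε^(2*N) := by rw [hR, div_pow]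
        rw [hRN, Real.norm_eq_abs, _root_.abs_pow, _root_.abs_of_nonneg hε0.le,
          div_div_eq_mul_div]
        ring

theorem aux2' (a b : ℂ) (h : ℝ) (n : ℤ) (hn : n ≠ 0) :
    (fun ε : ℝ => ∫ θ in (0:ℝ)..(2*π),
        Complex.exp (-(2 * (n:ℂ) * (θ:ℂ)) * Complex.I) *
          (1 + (ε:ℂ)^2 * (a * Complex.exp (2*(θ:ℂ)*Complex.I)
            + b * Complex.exp (-(2*(θ:ℂ))*Complex.I))) ^ (h:ℂ))
      =O[nhdsWithin 0 (Set.Ioi 0)] (fun ε : ℝ => ε ^ (2 * n.natAbs)) := by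
  rcases lt_or_gt_of_ne hn with hneg | hpos
  · -- negative case : substitute θ ↦ -θ
    set N : ℕ := n.natAbs with hNdef
    have hN : 0 < N := Int.natAbs_pos.mpr hn
    have hnN : (n:ℂ) = -(N:ℂ) := by
      have : n = -(N:ℤ) := by
        rw [hNdef]; omega
      rw [this]; push_cast; ring
    have hfun : ∀ ε : ℝ, (∫ θ in (0:ℝ)..(2*π),
        Complex.exp (-(2 * (n:ℂ) * (θ:ℂ)) * Complex.I) *
          (1 + (ε:ℂ)^2 * (a * Complex.exp (2*(θ:ℂ)*Complex.I)
            + b * Complex.exp (-(2*(θ:ℂ))*Complex.I))) ^ (h:ℂ))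
        = ∫ θ in (0:ℝ)..(2*π),
        Complex.exp (-(2 * (N:ℂ) * (θ:ℂ)) * Complex.I) *
          (1 + (ε:ℂ)^2 * (b * Complex.exp (2*(θ:ℂ)*Complex.I)
            + a * Complex.exp (-(2*(θ:ℂ))*Complex.I))) ^ (h:ℂ) := by
      intro ε
      set g : ℝ → ℂ := fun θ =>
        Complex.exp (-(2 * (N:ℂ) * (θ:ℂ)) * Complex.I) *
          (1 + (ε:ℂ)^2 * (b * Complex.exp (2*(θ:ℂ)*Complex.I)
            + a * Complex.exp (-(2*(θ:ℂ))*Complex.I))) ^ (h:ℂ) with hg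
      have hcomp : ∀ θ : ℝ, Complex.exp (-(2 * (n:ℂ) * (θ:ℂ)) * Complex.I) *
          (1 + (ε:ℂ)^2 * (a * Complex.exp (2*(θ:ℂ)*Complex.I)
            + b * Complex.exp (-(2*(θ:ℂ))*Complex.I))) ^ (h:ℂ) = g (-θ) := by
        intro θ
        rw [hg]
        push_cast
        rw [hnN]
        norm_num
        ring_nf
      have hper : Function.Periodic g (2*π) := by
        intro θ
        rw [hg]
        have e1 : -(2 * (N:ℂ) * (((θ + 2*π :ℝ)):ℂ)) * Complex.I
            = -(2 * (N:ℂ) * (θ:ℂ)) * Complex.I + ((-2*(N:ℤ) : ℤ):ℂ) * (2*π*Complex.I) := by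
          push_cast; ring
        have e2 : 2 * (((θ + 2*π :ℝ)):ℂ) * Complex.I
            = 2 * (θ:ℂ) * Complex.I + ((2:ℤ):ℂ) * (2*π*Complex.I) := by push_cast; ring
        have e3 : -(2 * (((θ + 2*π :ℝ)):ℂ)) * Complex.I
            = -(2 * (θ:ℂ)) * Complex.I + ((-2:ℤ):ℂ) * (2*π*Complex.I) := by push_cast; ring
        simp only [e1, e2, e3, Complex.exp_add, Complex.exp_int_mul_two_pi_mul_I, mul_one]
      calc (∫ θ in (0:ℝ)..(2*π),
          Complex.exp (-(2 * (n:ℂ) * (θ:ℂ)) * Complex.I) *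
            (1 + (ε:ℂ)^2 * (a * Complex.exp (2*(θ:ℂ)*Complex.I)
              + b * Complex.exp (-(2*(θ:ℂ))*Complex.I))) ^ (h:ℂ))
          = ∫ θ in (0:ℝ)..(2*π), g (-θ) := by
            apply intervalIntegral.integral_congr
            intro θ _
            exact hcomp θ
        _ = ∫ θ in (-(2*π))..(0:ℝ), g θ := by
            simpa using intervalIntegral.integral_comp_neg g (a := 0) (b := 2*π)
        _ = ∫ θ in (0:ℝ)..(2*π), g θ := by
            have := hper.intervalIntegral_add_eq (-(2*π)) 0
            simpa using this
    have : (fun ε : ℝ => ∫ θ in (0:ℝ)..(2*π),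
        Complex.exp (-(2 * (n:ℂ) * (θ:ℂ)) * Complex.I) *
          (1 + (ε:ℂ)^2 * (a * Complex.exp (2*(θ:ℂ)*Complex.I)
            + b * Complex.exp (-(2*(θ:ℂ))*Complex.I))) ^ (h:ℂ))
        = (fun ε : ℝ => ∫ θ in (0:ℝ)..(2*π),
        Complex.exp (-(2 * (N:ℂ) * (θ:ℂ)) * Complex.I) *
          (1 + (ε:ℂ)^2 * (b * Complex.exp (2*(θ:ℂ)*Complex.I)
            + a * Complex.exp (-(2*(θ:ℂ))*Complex.I))) ^ (h:ℂ)) := funext hfun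
    rw [this]
    exact aux2 b a h N hN
  · -- positive case
    set N : ℕ := n.natAbs with hNdef
    have hN : 0 < N := Int.natAbs_pos.mpr hn
    have hnN : (n:ℂ) = (N:ℂ) := by
      have : n = (N:ℤ) := by rw [hNdef]; omega
      rw [this]; push_cast; ring
    have : (fun ε : ℝ => ∫ θ in (0:ℝ)..(2*π),
        Complex.exp (-(2 * (n:ℂ) * (θ:ℂ)) * Complex.I) *
          (1 + (ε:ℂ)^2 * (a * Complex.exp (2*(θ:ℂ)*Complex.I)
            + b * Complex.exp (-(2*(θ:ℂ))*Complex.I))) ^ (h:ℂ))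
        = (fun ε : ℝ => ∫ θ in (0:ℝ)..(2*π),
        Complex.exp (-(2 * (N:ℂ) * (θ:ℂ)) * Complex.I) *
          (1 + (ε:ℂ)^2 * (a * Complex.exp (2*(θ:ℂ)*Complex.I)
            + b * Complex.exp (-(2*(θ:ℂ))*Complex.I))) ^ (h:ℂ)) := by
      funext ε
      rw [hnN]
    rw [this]
    exact aux2 a b h N hN

theorem stmt6 (w : ℂ) (hw : 0 < w.im) (h : ℝ)
    (d : ℝ → ℝ → ℂ)
    (hd : ∀ ε θ : ℝ, d ε θ = 1 + ((ε : ℂ) ^ 2 / 16) *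
        (Complex.exp (2 * (θ : ℂ) * Complex.I) / w ^ 2
          + Complex.exp (-(2 * (θ : ℂ)) * Complex.I) / (starRingEnd ℂ w) ^ 2)) :
    (∀ ε : ℝ, 0 < ε → (∀ θ : ℝ, d ε θ ∈ Complex.slitPlane) →
      ∀ m : ℤ,
        ∫ θ in (0 : ℝ)..(2 * π),
          Complex.exp (-((2 * (m : ℂ) + 1) * (θ : ℂ)) * Complex.I) * (d ε θ) ^ (h : ℂ) = 0) ∧
    (∀ n : ℤ, n ≠ 0 →
      (fun ε : ℝ => ∫ θ in (0 : ℝ)..(2 * π),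
          Complex.exp (-(2 * (n : ℂ) * (θ : ℂ)) * Complex.I) * (d ε θ) ^ (h : ℂ))
        =O[nhdsWithin 0 (Set.Ioi 0)] (fun ε : ℝ => ε ^ (2 * n.natAbs))) := by
  constructor
  · intro ε _ _ m
    exact part1 w h d hd ε m
  · intro n hn
    have hwne : w ≠ 0 := by
      intro hc; rw [hc] at hw; simp at hw
    have hcwne : (starRingEnd ℂ w) ≠ 0 := by
      simpa using hwne
    set a : ℂ := 1 / (16 * w^2) with ha
    set b : ℂ := 1 / (16 * (starRingEnd ℂ w)^2) with hb
    have hfun : (fun ε : ℝ => ∫ θ in (0 : ℝ)..(2 * π),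
          Complex.exp (-(2 * (n : ℂ) * (θ : ℂ)) * Complex.I) * (d ε θ) ^ (h : ℂ))
        = (fun ε : ℝ => ∫ θ in (0:ℝ)..(2*π),
          Complex.exp (-(2 * (n:ℂ) * (θ:ℂ)) * Complex.I) *
            (1 + (ε:ℂ)^2 * (a * Complex.exp (2*(θ:ℂ)*Complex.I)
              + b * Complex.exp (-(2*(θ:ℂ))*Complex.I))) ^ (h:ℂ)) := by
      funext ε
      apply intervalIntegral.integral_congr
      intro θ _
      simp only []
      rw [hd]
      congr 2
      rw [ha, hb]
      field_simp
    rw [hfun]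
    exact aux2' a b h n hn
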